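/- Let η ∈ (0, π/3] and let α, β, γ, α̃, β̃, γ̃ ∈ (η, π − η) with α + β + γ = π and α̃ + β̃ + γ̃ = π. With g = sin γ̃/sin γ, P = (sin α̃ · sin β̃)/(sin α · sin β), Q = (cos α̃ · sin β̃)/(sin α · sin β) − (cos α · sin γ̃)/(sin α · sin γ), and μ = (g − P + iQ)/(g + P − iQ), one has 4·(sin α̃ sin β̃ sin γ̃)/(sin α sin β sin γ)/((g + P)² + Q²) ≥ 4·sin³η / (2·(1/sin²η + 3/sin⁴η)), and consequently |μ|² ≤ 1 − 2·sin⁷η/(sin²η + 3) < 1. -/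

import Mathlib

set_option maxHeartbeats 800000


open Real

lemma sin_ge_sin_eta' {η x : ℝ} (hη0 : 0 < η) (hη2 : η ≤ π / 2)
    (h1 : η ≤ x) (h2 : x ≤ π - η) : Real.sin η ≤ Real.sin x := by
  rcases le_total x (π / 2) with h | h
  · exact Real.strictMonoOn_sin.monotoneOn
      ⟨by linarith, hη2⟩ ⟨by linarith, h⟩ h1
  · have : Real.sin x = Real.sin (π - x) := (Real.sin_pi_sub x).symm
    rw [this]
    exact Real.strictMonoOn_sin.monotoneOn
      ⟨by linarith, hη2⟩ ⟨by linarith, by linarith⟩ (by linarith)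

/-- Quantitative quasiconformality: if all six triangle angles lie in `(η, π − η)`, the
Beltrami coefficient `μ` satisfies a uniform bound `|μ|² ≤ 1 − 2 sin⁷η/(sin²η + 3) < 1`. -/
theorem beltrami_uniform_bound (η : ℝ) (hη : η ∈ Set.Ioc 0 (π / 3))
    (α β γ αt βt γt : ℝ)
    (hα : α ∈ Set.Ioo η (π - η)) (hβ : β ∈ Set.Ioo η (π - η)) (hγ : γ ∈ Set.Ioo η (π - η))
    (hαt : αt ∈ Set.Ioo η (π - η)) (hβt : βt ∈ Set.Ioo η (π - η))
    (hγt : γt ∈ Set.Ioo η (π - η))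
    (hsum : α + β + γ = π) (hsumt : αt + βt + γt = π)
    (g P Q : ℝ)
    (hg : g = Real.sin γt / Real.sin γ)
    (hP : P = Real.sin αt * Real.sin βt / (Real.sin α * Real.sin β))
    (hQ : Q = Real.cos αt * Real.sin βt / (Real.sin α * Real.sin β)
        - Real.cos α * Real.sin γt / (Real.sin α * Real.sin γ))
    (μ : ℂ)
    (hμ : μ = ((g : ℂ) - (P : ℂ) + Complex.I * (Q : ℂ)) /
        ((g : ℂ) + (P : ℂ) - Complex.I * (Q : ℂ))) :
    4 * (Real.sin αt * Real.sin βt * Real.sin γt /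
          (Real.sin α * Real.sin β * Real.sin γ)) / ((g + P) ^ 2 + Q ^ 2)
        ≥ 4 * Real.sin η ^ 3 / (2 * (1 / Real.sin η ^ 2 + 3 / Real.sin η ^ 4)) ∧
      ‖μ‖ ^ 2 ≤ 1 - 2 * Real.sin η ^ 7 / (Real.sin η ^ 2 + 3) ∧
      1 - 2 * Real.sin η ^ 7 / (Real.sin η ^ 2 + 3) < 1 := by
  obtain ⟨hη0, hη3⟩ := hη
  have hπ : (0 : ℝ) < π := Real.pi_pos
  have hη2 : η ≤ π / 2 := hη3.trans (by linarith)
  set s := Real.sin η with hs_def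
  have hs : 0 < s := Real.sin_pos_of_pos_of_lt_pi hη0 (by linarith)
  have key : ∀ x : ℝ, x ∈ Set.Ioo η (π - η) → s ≤ Real.sin x ∧ Real.sin x ≤ 1 :=
    fun x hx => ⟨sin_ge_sin_eta' hη0 hη2 hx.1.le hx.2.le, Real.sin_le_one x⟩
  obtain ⟨ha1, ha2⟩ := key α hα
  obtain ⟨hb1, hb2⟩ := key β hβ
  obtain ⟨hc1, hc2⟩ := key γ hγ
  obtain ⟨hat1, hat2⟩ := key αt hαt
  obtain ⟨hbt1, hbt2⟩ := key βt hβt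
  obtain ⟨hct1, hct2⟩ := key γt hγt
  have hsa : 0 < Real.sin α := hs.trans_le ha1
  have hsb : 0 < Real.sin β := hs.trans_le hb1
  have hsc : 0 < Real.sin γ := hs.trans_le hc1
  have hsat : 0 < Real.sin αt := hs.trans_le hat1
  have hsbt : 0 < Real.sin βt := hs.trans_le hbt1
  have hsct : 0 < Real.sin γt := hs.trans_le hct1
  have hs2 : 0 < s ^ 2 := pow_pos hs 2
  have hs4 : 0 < s ^ 4 := pow_pos hs 4
  -- bounds on g, P, Q
  have hg0 : 0 < g := hg ▸ div_pos hsct hsc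
  have hP0 : 0 < P := hP ▸ div_pos (mul_pos hsat hsbt) (mul_pos hsa hsb)
  have hden2 : s ^ 2 ≤ Real.sin α * Real.sin β := by
    linarith only [mul_le_mul ha1 hb1 hs.le hsa.le]
  have hdenac : s ^ 2 ≤ Real.sin α * Real.sin γ := by
    linarith only [mul_le_mul ha1 hc1 hs.le hsa.le]
  have hg_le : g ≤ 1 / s := hg ▸ div_le_div₀ zero_le_one hct2 hs hc1
  have hP_le : P ≤ 1 / s ^ 2 := by
    rw [hP]
    exact div_le_div₀ zero_le_one (mul_le_one₀ hat2 hsbt.le hbt2) hs2 hden2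
  have hA_le : Real.cos αt * Real.sin βt / (Real.sin α * Real.sin β) ≤ 1 / s ^ 2 :=
    div_le_div₀ zero_le_one (mul_le_one₀ (Real.cos_le_one αt) hsbt.le hbt2) hs2 hden2
  have hA_ge : -(1 / s ^ 2) ≤ Real.cos αt * Real.sin βt / (Real.sin α * Real.sin β) := by
    rw [neg_le, ← neg_div]
    refine div_le_div₀ zero_le_one ?_ hs2 hden2
    have h1 : -Real.cos αt * Real.sin βt ≤ 1 :=
      mul_le_one₀ (by linarith only [Real.neg_one_le_cos αt]) hsbt.le hbt2
    linarith only [h1]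
  have hB_le : Real.cos α * Real.sin γt / (Real.sin α * Real.sin γ) ≤ 1 / s ^ 2 :=
    div_le_div₀ zero_le_one (mul_le_one₀ (Real.cos_le_one α) hsct.le hct2) hs2 hdenac
  have hB_ge : -(1 / s ^ 2) ≤ Real.cos α * Real.sin γt / (Real.sin α * Real.sin γ) := by
    rw [neg_le, ← neg_div]
    refine div_le_div₀ zero_le_one ?_ hs2 hdenac
    have h1 : -Real.cos α * Real.sin γt ≤ 1 :=
      mul_le_one₀ (by linarith only [Real.neg_one_le_cos α]) hsct.le hct2
    linarith only [h1]
  have hQ_le : Q ≤ 2 / s ^ 2 := by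
    rw [hQ]
    have h1 : (2 : ℝ) / s ^ 2 = 1 / s ^ 2 + 1 / s ^ 2 := by ring
    rw [h1]
    linarith only [hA_le, hB_ge]
  have hQ_ge : -(2 / s ^ 2) ≤ Q := by
    rw [hQ]
    have h1 : (2 : ℝ) / s ^ 2 = 1 / s ^ 2 + 1 / s ^ 2 := by ring
    rw [h1]
    linarith only [hA_ge, hB_le]
  have hQ_sq : Q ^ 2 ≤ 4 / s ^ 4 := by
    have h1 : Q ^ 2 ≤ (2 / s ^ 2) ^ 2 := sq_le_sq' hQ_ge hQ_le
    have h2 : ((2 : ℝ) / s ^ 2) ^ 2 = 4 / s ^ 4 := by ring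
    linarith only [h1, h2]
  have hg_sq : g ^ 2 ≤ 1 / s ^ 2 := by
    have h1 : g ^ 2 ≤ (1 / s) ^ 2 := pow_le_pow_left₀ hg0.le hg_le 2
    have h2 : ((1 : ℝ) / s) ^ 2 = 1 / s ^ 2 := by ring
    linarith only [h1, h2]
  have hP_sq : P ^ 2 ≤ 1 / s ^ 4 := by
    have h1 : P ^ 2 ≤ (1 / s ^ 2) ^ 2 := pow_le_pow_left₀ hP0.le hP_le 2
    have h2 : ((1 : ℝ) / s ^ 2) ^ 2 = 1 / s ^ 4 := by ring
    linarith only [h1, h2]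
  set D := (g + P) ^ 2 + Q ^ 2 with hD_def
  have hD0 : 0 < D := by
    rw [hD_def]
    exact add_pos_of_pos_of_nonneg (pow_pos (by linarith only [hg0, hP0]) 2) (sq_nonneg Q)
  have hDle : D ≤ 2 * (1 / s ^ 2 + 3 / s ^ 4) := by
    have hgp2 : (g + P) ^ 2 ≤ 2 * g ^ 2 + 2 * P ^ 2 := by linarith only [sq_nonneg (g - P)]
    rw [hD_def]
    have h : 2 * (1 / s ^ 2 + 3 / s ^ 4) = 2 * (1 / s ^ 2) + 2 * (1 / s ^ 4) + 4 * (1 / s ^ 4) := by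
      ring
    rw [h]
    have h4 : (4 : ℝ) / s ^ 4 = 4 * (1 / s ^ 4) := by ring
    rw [h4] at hQ_sq
    linarith only [hgp2, hg_sq, hP_sq, hQ_sq]
  set N := Real.sin αt * Real.sin βt * Real.sin γt / (Real.sin α * Real.sin β * Real.sin γ)
    with hN_def
  have hnum3 : s ^ 3 ≤ Real.sin αt * Real.sin βt * Real.sin γt := by
    have h1 : s * s ≤ Real.sin αt * Real.sin βt := mul_le_mul hat1 hbt1 hs.le hsat.le
    have h2 : (s * s) * s ≤ (Real.sin αt * Real.sin βt) * Real.sin γt :=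
      mul_le_mul h1 hct1 hs.le (mul_pos hsat hsbt).le
    calc s ^ 3 = s * s * s := by ring
      _ ≤ _ := h2
  have hden3 : Real.sin α * Real.sin β * Real.sin γ ≤ 1 :=
    mul_le_one₀ (mul_le_one₀ ha2 hsb.le hb2) hsc.le hc2
  have hdpos : 0 < Real.sin α * Real.sin β * Real.sin γ := mul_pos (mul_pos hsa hsb) hsc
  have hN : s ^ 3 ≤ N := by
    rw [hN_def, le_div_iff₀ hdpos]
    have h1 : s ^ 3 * (Real.sin α * Real.sin β * Real.sin γ) ≤ s ^ 3 * 1 :=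
      mul_le_mul_of_nonneg_left hden3 (pow_pos hs 3).le
    linarith only [h1, hnum3]
  have hN0 : 0 < N := lt_of_lt_of_le (pow_pos hs 3) hN
  have first : 4 * N / D ≥ 4 * s ^ 3 / (2 * (1 / s ^ 2 + 3 / s ^ 4)) :=
    div_le_div₀ (by linarith only [hN0]) (by linarith only [hN]) hD0 hDle
  have hrhs : 4 * s ^ 3 / (2 * (1 / s ^ 2 + 3 / s ^ 4)) = 2 * s ^ 7 / (s ^ 2 + 3) := by
    have hd1 : 0 < 2 * (1 / s ^ 2 + 3 / s ^ 4) :=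
      mul_pos two_pos (add_pos (div_pos one_pos hs2) (div_pos (by norm_num) hs4))
    have hd2 : (0 : ℝ) < s ^ 2 + 3 := by linarith only [hs2]
    rw [div_eq_div_iff hd1.ne' hd2.ne']
    field_simp
    ring
  refine ⟨first, ?_, ?_⟩
  · -- |μ|² bound
    have hre : ((g : ℂ) + (P : ℂ) - Complex.I * (Q : ℂ)).re = g + P := by simp
    have hne : ((g : ℂ) + (P : ℂ) - Complex.I * (Q : ℂ)) ≠ 0 := by
      intro h
      rw [h] at hre
      simp at hre
      linarith only [hg0, hP0, hre]
    have habs : ‖μ‖ ^ 2 = ((g - P) ^ 2 + Q ^ 2) / D := by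
      rw [hμ, norm_div, div_pow, Complex.sq_norm, Complex.sq_norm, hD_def]
      congr 1 <;> simp [Complex.normSq_apply] <;> ring
    have hNgP : N = g * P := by
      rw [hN_def, hg, hP]
      field_simp
    have hsplit : ((g - P) ^ 2 + Q ^ 2) / D = 1 - 4 * N / D := by
      rw [hNgP, hD_def]
      field_simp
      ring
    rw [habs, hsplit]
    have h2 := first
    rw [hrhs] at h2
    linarith only [h2]
  · have h3 : 0 < 2 * s ^ 7 / (s ^ 2 + 3) :=
      div_pos (mul_pos two_pos (pow_pos hs 7)) (by linarith only [hs2])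
    linarith only [h3]
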